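/- Let A, B > 0, put X := [0,A] and Y := [0,B], let μ_M be a Borel probability measure on X×Y, let ν be a Borel probability measure on X, and let β₀₀ > 0. Then there exists a Borel probability measure μ on X×Y satisfying ∬ s^i dμ(s,t) = ∫ s^i dν(s) for all integers i ≥ 0 and ∬ s^i t^{j+1} dμ(s,t) = β₀₀² ∬ s^i t^j dμ_M(s,t) for all integers i, j ≥ 0, if and only if the following three conditions hold: (i) the function (s,t) ↦ 1/t is μ_M-integrable; (ii) β₀₀² ∬ (1/t) dμ_M ≤ 1; (iii) for every Borel set E ⊆ X, β₀₀² ∬_{E×Y, t>0} (1/t) dμ_M(s,t) ≤ ν(E). Moreover, if β₀₀² ∬ (1/t) dμ_M = 1, then equality holds in (iii) for every Borel E ⊆ X. -/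

import Mathlib

open MeasureTheory Set
open scoped ENNReal NNReal

lemma monomial_integrable {A B : ℝ} (P : Measure (ℝ × ℝ)) [IsFiniteMeasure P]
    (hP : P (Set.Icc (0:ℝ) A ×ˢ Set.Icc (0:ℝ) B)ᶜ = 0) (i j : ℕ) :
    Integrable (fun p : ℝ × ℝ => p.1 ^ i * p.2 ^ j) P := by
  have hK : ∀ᵐ p ∂P, p ∈ Set.Icc (0:ℝ) A ×ˢ Set.Icc (0:ℝ) B := by
    rw [ae_iff]
    convert hP using 2; rfl
  refine ⟨((continuous_fst.pow i).mul (continuous_snd.pow j)).aestronglyMeasurable, ?_⟩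
  apply HasFiniteIntegral.of_bounded (C := A ^ i * B ^ j)
  filter_upwards [hK] with p hp
  obtain ⟨⟨h1, h2⟩, h3, h4⟩ := hp
  rw [Real.norm_eq_abs, abs_of_nonneg (mul_nonneg (pow_nonneg h1 i) (pow_nonneg h3 j))]
  exact mul_le_mul (pow_le_pow_left₀ h1 h2 i) (pow_le_pow_left₀ h3 h4 j)
    (pow_nonneg h3 j) (pow_nonneg (h1.trans h2) i)

lemma closure_monomial {x : ℝ × ℝ → ℝ}
    (hx : x ∈ Submonoid.closure ({(fun p => p.1), (fun p => p.2)} : Set (ℝ×ℝ → ℝ))) :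
    ∃ i j : ℕ, x = fun p : ℝ×ℝ => p.1 ^ i * p.2 ^ j := by
  induction hx using Submonoid.closure_induction with
  | mem y hy =>
    rcases hy with hy | hy
    · exact ⟨1, 0, by rw [hy]; funext p; simp⟩
    · exact ⟨0, 1, by rw [hy]; funext p; simp⟩
  | one => exact ⟨0, 0, by funext p; simp⟩
  | mul y z _ _ hy hz =>
    obtain ⟨a, b, rfl⟩ := hy
    obtain ⟨c, d, rfl⟩ := hz
    exact ⟨a + c, b + d, by funext p; simp only [Pi.mul_apply, pow_add]; ring⟩

lemma poly_integral {A B : ℝ} (P Q : Measure (ℝ×ℝ)) [IsFiniteMeasure P] [IsFiniteMeasure Q]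
    (hP : P (Set.Icc (0:ℝ) A ×ˢ Set.Icc (0:ℝ) B)ᶜ = 0)
    (hQ : Q (Set.Icc (0:ℝ) A ×ˢ Set.Icc (0:ℝ) B)ᶜ = 0)
    (h : ∀ i j : ℕ, ∫ p, p.1 ^ i * p.2 ^ j ∂P = ∫ p, p.1 ^ i * p.2 ^ j ∂Q)
    {q : ℝ × ℝ → ℝ}
    (hq : q ∈ Algebra.adjoin ℝ ({(fun p => p.1), (fun p => p.2)} : Set (ℝ×ℝ → ℝ))) :
    Integrable q P ∧ Integrable q Q ∧ ∫ p, q p ∂P = ∫ p, q p ∂Q := by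
  have hq' : q ∈ Submodule.span ℝ
      ((Submonoid.closure ({(fun p => p.1), (fun p => p.2)} : Set (ℝ×ℝ → ℝ))) : Set (ℝ×ℝ → ℝ)) := by
    rw [← Algebra.adjoin_eq_span]; exact hq
  clear hq
  induction hq' using Submodule.span_induction with
  | mem x hx =>
    obtain ⟨i, j, rfl⟩ := closure_monomial hx
    exact ⟨monomial_integrable P hP i j, monomial_integrable Q hQ i j, h i j⟩
  | zero => simpa using ⟨integrable_zero _ _ _, integrable_zero _ _ _⟩
  | add x y hx hy ihx ihy =>
    obtain ⟨ix1, ix2, ex⟩ := ihx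
    obtain ⟨iy1, iy2, ey⟩ := ihy
    refine ⟨ix1.add iy1, ix2.add iy2, ?_⟩
    show ∫ p, (x p + y p) ∂P = ∫ p, (x p + y p) ∂Q
    rw [integral_add ix1 iy1, integral_add ix2 iy2, ex, ey]
  | smul a x hx ihx =>
    obtain ⟨ix1, ix2, ex⟩ := ihx
    refine ⟨ix1.smul a, ix2.smul a, ?_⟩
    show ∫ p, a • x p ∂P = ∫ p, a • x p ∂Q
    rw [integral_smul, integral_smul, ex]



lemma cont_integral {A B : ℝ} (P Q : Measure (ℝ×ℝ)) [IsFiniteMeasure P] [IsFiniteMeasure Q]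
    (hP : P (Set.Icc (0:ℝ) A ×ˢ Set.Icc (0:ℝ) B)ᶜ = 0)
    (hQ : Q (Set.Icc (0:ℝ) A ×ˢ Set.Icc (0:ℝ) B)ᶜ = 0)
    (h : ∀ i j : ℕ, ∫ p, p.1 ^ i * p.2 ^ j ∂P = ∫ p, p.1 ^ i * p.2 ^ j ∂Q)
    (f : ℝ×ℝ → ℝ) (hf : Continuous f) (hfP : Integrable f P) (hfQ : Integrable f Q) :
    ∫ p, f p ∂P = ∫ p, f p ∂Q := by
  set K : Set (ℝ×ℝ) := Set.Icc (0:ℝ) A ×ˢ Set.Icc (0:ℝ) B with hKdef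
  haveI : CompactSpace K := isCompact_iff_compactSpace.mp (isCompact_Icc.prod isCompact_Icc)
  have haeP : ∀ᵐ p ∂P, p ∈ K := by rw [ae_iff]; convert hP using 2; rfl
  have haeQ : ∀ᵐ p ∂Q, p ∈ K := by rw [ae_iff]; convert hQ using 2; rfl
  set x₁ : C(K, ℝ) := ⟨fun x => (x : ℝ×ℝ).1, continuous_fst.comp continuous_subtype_val⟩ with hx₁
  set x₂ : C(K, ℝ) := ⟨fun x => (x : ℝ×ℝ).2, continuous_snd.comp continuous_subtype_val⟩ with hx₂
  have hsep : (Algebra.adjoin ℝ ({x₁, x₂} : Set C(K,ℝ))).SeparatesPoints := by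
    intro x y hxy
    by_cases h1 : (x : ℝ×ℝ).1 = (y : ℝ×ℝ).1
    · refine ⟨(x₂ : K → ℝ), ⟨x₂, Algebra.subset_adjoin (by simp), rfl⟩, fun hc => ?_⟩
      exact hxy (Subtype.ext (Prod.ext h1 hc))
    · exact ⟨(x₁ : K → ℝ), ⟨x₁, Algebra.subset_adjoin (by simp), rfl⟩, h1⟩
  have hext : ∀ g ∈ Algebra.adjoin ℝ ({x₁, x₂} : Set C(K,ℝ)),
      ∃ G ∈ Algebra.adjoin ℝ ({(fun p => p.1), (fun p => p.2)} : Set (ℝ×ℝ → ℝ)),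
        ∀ x : K, G x = g x := by
    intro g hg
    induction hg using Algebra.adjoin_induction with
    | mem y hy =>
      rcases hy with hy | hy
      · exact ⟨fun p => p.1, Algebra.subset_adjoin (by simp),
          fun x => by rw [hy]; rfl⟩
      · exact ⟨fun p => p.2, Algebra.subset_adjoin (by simp),
          fun x => by rw [hy]; rfl⟩
    | algebraMap r =>
      refine ⟨fun _ => r, ?_, fun x => by simp⟩
      exact Subalgebra.algebraMap_mem _ r
    | add y z hy hz ihy ihz =>
      obtain ⟨Gy, hGy, hvy⟩ := ihy
      obtain ⟨Gz, hGz, hvz⟩ := ihz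
      exact ⟨Gy + Gz, add_mem hGy hGz, fun x => by
        simp [Pi.add_apply, hvy x, hvz x]⟩
    | mul y z hy hz ihy ihz =>
      obtain ⟨Gy, hGy, hvy⟩ := ihy
      obtain ⟨Gz, hGz, hvz⟩ := ihz
      exact ⟨Gy * Gz, mul_mem hGy hGz, fun x => by
        simp [Pi.mul_apply, hvy x, hvz x]⟩
  have key : ∀ ε : ℝ, 0 < ε →
      |∫ p, f p ∂P - ∫ p, f p ∂Q| ≤ ε * ((P univ).toReal + (Q univ).toReal) := by
    intro ε hε
    obtain ⟨g, hg⟩ := ContinuousMap.exists_mem_subalgebra_near_continuous_of_separatesPoints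
      (Algebra.adjoin ℝ ({x₁, x₂} : Set C(K,ℝ))) hsep (fun x : K => f x)
      (hf.comp continuous_subtype_val) ε hε
    obtain ⟨G, hGmem, hGval⟩ := hext g g.2
    obtain ⟨hGP, hGQ, hGeq⟩ := poly_integral P Q hP hQ h hGmem
    have bound : ∀ (R : Measure (ℝ×ℝ)) (_ : IsFiniteMeasure R), (∀ᵐ p ∂ R, p ∈ K) →
        Integrable f R → Integrable G R →
        |∫ p, f p ∂ R - ∫ p, G p ∂ R| ≤ ε * (R univ).toReal := by
      intro R hR hae hfR hGR
      rw [← integral_sub hfR hGR, ← Real.norm_eq_abs]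
      apply norm_integral_le_of_norm_le_const
      filter_upwards [hae] with p hp
      have h1 := hg ⟨p, hp⟩
      have h2 : G p = (g : C(K,ℝ)) ⟨p, hp⟩ := hGval ⟨p, hp⟩
      calc ‖f p - G p‖ = ‖(g : C(K,ℝ)) ⟨p, hp⟩ - f p‖ := by rw [h2, norm_sub_rev]
        _ ≤ ε := le_of_lt h1
    have bP := bound P inferInstance haeP hfP hGP
    have bQ := bound Q inferInstance haeQ hfQ hGQ
    calc |∫ p, f p ∂P - ∫ p, f p ∂Q|
        ≤ |∫ p, f p ∂P - ∫ p, G p ∂P| + |∫ p, G p ∂P - ∫ p, f p ∂Q| :=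
          abs_sub_le _ _ _
      _ ≤ ε * (P univ).toReal + ε * (Q univ).toReal :=
          add_le_add bP (by rw [hGeq, abs_sub_comm]; exact bQ)
      _ = ε * ((P univ).toReal + (Q univ).toReal) := by ring
  have h0 : |∫ p, f p ∂P - ∫ p, f p ∂Q| ≤ 0 := by
    apply le_of_forall_pos_le_add
    intro ε hε
    set C := (P univ).toReal + (Q univ).toReal with hC
    have hC0 : 0 ≤ C := add_nonneg ENNReal.toReal_nonneg ENNReal.toReal_nonneg
    have hk := key (ε / (C+1)) (by positivity)
    calc |∫ p, f p ∂P - ∫ p, f p ∂Q| ≤ (ε/(C+1)) * C := hk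
      _ ≤ (ε/(C+1)) * (C+1) := by
          apply mul_le_mul_of_nonneg_left (by linarith) (by positivity)
      _ = ε := by field_simp
      _ = 0 + ε := by ring
  have := abs_nonpos_iff.mp h0
  linarith [sub_eq_zero.mp this]

lemma ext2D {A B : ℝ} (P Q : Measure (ℝ×ℝ)) [IsFiniteMeasure P] [IsFiniteMeasure Q]
    (hP : P (Set.Icc (0:ℝ) A ×ˢ Set.Icc (0:ℝ) B)ᶜ = 0)
    (hQ : Q (Set.Icc (0:ℝ) A ×ˢ Set.Icc (0:ℝ) B)ᶜ = 0)
    (h : ∀ i j : ℕ, ∫ p, p.1 ^ i * p.2 ^ j ∂P = ∫ p, p.1 ^ i * p.2 ^ j ∂Q) :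
    P = Q := by
  apply ext_of_forall_lintegral_eq_of_IsFiniteMeasure
  intro f
  have hcont : Continuous (fun x : ℝ×ℝ => (f x : ℝ)) := NNReal.continuous_coe.comp f.continuous
  set F : BoundedContinuousFunction (ℝ×ℝ) ℝ := BoundedContinuousFunction.comp _ isometry_subtype_coe.lipschitz f with hF
  have hint : ∀ (R : Measure (ℝ×ℝ)), IsFiniteMeasure R → Integrable (fun x => (f x : ℝ)) R := by
    intro R hR
    refine ⟨hcont.aestronglyMeasurable,
      HasFiniteIntegral.of_bounded (C := ‖F‖) (ae_of_all _ fun x => ?_)⟩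
    exact F.norm_coe_le_norm x
  rw [lintegral_coe_eq_integral f (hint P inferInstance), lintegral_coe_eq_integral f (hint Q inferInstance)]
  exact congrArg ENNReal.ofReal
    (cont_integral P Q hP hQ h _ hcont (hint P inferInstance) (hint Q inferInstance))



/-- Subnormal backward extension of a 2-variable weighted shift (measure form).
The integral of `1/t` is expressed as the lower integral of `(ENNReal.ofReal p.2)⁻¹`,
which is `∞` when `t = 0`, so its finiteness is exactly `1/t ∈ L¹(μ_M)`. -/
theorem stmt10 (A B : ℝ) (hA : 0 < A) (hB : 0 < B)
    (μM : Measure (ℝ × ℝ)) (hμMprob : IsProbabilityMeasure μM)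
    (hμMsupp : μM (Set.Icc (0 : ℝ) A ×ˢ Set.Icc (0 : ℝ) B)ᶜ = 0)
    (ν : Measure ℝ) (hνprob : IsProbabilityMeasure ν)
    (hνsupp : ν (Set.Icc (0 : ℝ) A)ᶜ = 0)
    (β₀₀ : ℝ) (hβ₀₀ : 0 < β₀₀) :
    ((∃ μ : Measure (ℝ × ℝ), IsProbabilityMeasure μ ∧
        μ (Set.Icc (0 : ℝ) A ×ˢ Set.Icc (0 : ℝ) B)ᶜ = 0 ∧
        (∀ i : ℕ, ∫ p, p.1 ^ i ∂μ = ∫ s, s ^ i ∂ν) ∧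
        (∀ i j : ℕ, ∫ p, p.1 ^ i * p.2 ^ (j + 1) ∂μ =
          β₀₀ ^ 2 * ∫ p, p.1 ^ i * p.2 ^ j ∂μM)) ↔
      ((∫⁻ p, (ENNReal.ofReal p.2)⁻¹ ∂μM) < ⊤ ∧
       ENNReal.ofReal (β₀₀ ^ 2) * (∫⁻ p, (ENNReal.ofReal p.2)⁻¹ ∂μM) ≤ 1 ∧
       (∀ E : Set ℝ, MeasurableSet E → E ⊆ Set.Icc (0 : ℝ) A →
         ENNReal.ofReal (β₀₀ ^ 2) *
           (∫⁻ p in (E ×ˢ (Set.univ : Set ℝ)) ∩ {p : ℝ × ℝ | 0 < p.2},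
             (ENNReal.ofReal p.2)⁻¹ ∂μM) ≤ ν E))) ∧
    ((∃ μ : Measure (ℝ × ℝ), IsProbabilityMeasure μ ∧
        μ (Set.Icc (0 : ℝ) A ×ˢ Set.Icc (0 : ℝ) B)ᶜ = 0 ∧
        (∀ i : ℕ, ∫ p, p.1 ^ i ∂μ = ∫ s, s ^ i ∂ν) ∧
        (∀ i j : ℕ, ∫ p, p.1 ^ i * p.2 ^ (j + 1) ∂μ =
          β₀₀ ^ 2 * ∫ p, p.1 ^ i * p.2 ^ j ∂μM)) →
      ENNReal.ofReal (β₀₀ ^ 2) * (∫⁻ p, (ENNReal.ofReal p.2)⁻¹ ∂μM) = 1 →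
      ∀ E : Set ℝ, MeasurableSet E → E ⊆ Set.Icc (0 : ℝ) A →
        ENNReal.ofReal (β₀₀ ^ 2) *
          (∫⁻ p in (E ×ˢ (Set.univ : Set ℝ)) ∩ {p : ℝ × ℝ | 0 < p.2},
            (ENNReal.ofReal p.2)⁻¹ ∂μM) = ν E) := by
  set K : Set (ℝ×ℝ) := Set.Icc (0:ℝ) A ×ˢ Set.Icc (0:ℝ) B with hKdef
  set c : ℝ≥0∞ := ENNReal.ofReal (β₀₀ ^ 2) with hcdef
  set g : ℝ×ℝ → ℝ≥0∞ := fun p => (ENNReal.ofReal p.2)⁻¹ with hgdef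
  have hc0 : c ≠ 0 := (ENNReal.ofReal_pos.mpr (by positivity)).ne'
  have hctop : c ≠ ⊤ := ENNReal.ofReal_ne_top
  have hgm : Measurable g := (measurable_snd.ennreal_ofReal).inv
  have hKmeas : MeasurableSet K := measurableSet_Icc.prod measurableSet_Icc
  have hpos : MeasurableSet {p : ℝ×ℝ | 0 < p.2} := measurableSet_lt measurable_const measurable_snd
  -- the master forward lemma
  have FWD : ∀ μ : Measure (ℝ × ℝ), IsProbabilityMeasure μ → μ Kᶜ = 0 →
      (∀ i : ℕ, ∫ p, p.1 ^ i ∂μ = ∫ s, s ^ i ∂ν) →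
      (∀ i j : ℕ, ∫ p, p.1 ^ i * p.2 ^ (j + 1) ∂μ =
          β₀₀ ^ 2 * ∫ p, p.1 ^ i * p.2 ^ j ∂μM) →
      (c * ∫⁻ p, g p ∂μM = μ {p : ℝ×ℝ | 0 < p.2}) ∧
      (∀ E : Set ℝ, MeasurableSet E → μ (E ×ˢ (univ : Set ℝ)) = ν E) ∧
      (∀ E : Set ℝ, MeasurableSet E →
        c * (∫⁻ p in (E ×ˢ (univ : Set ℝ)) ∩ {p : ℝ × ℝ | 0 < p.2}, g p ∂μM)
          = μ ((E ×ˢ (univ : Set ℝ)) ∩ {p : ℝ × ℝ | 0 < p.2})) := by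
    intro μ hμprob hμsupp hm1 hm2
    have haeμ : ∀ᵐ p ∂μ, p ∈ K := by rw [ae_iff]; convert hμsupp using 2; rfl
    haveI : IsFiniteMeasure (μ.withDensity fun p => ENNReal.ofReal p.2) := by
      constructor
      rw [withDensity_apply _ MeasurableSet.univ, Measure.restrict_univ]
      calc ∫⁻ p, ENNReal.ofReal p.2 ∂μ ≤ ∫⁻ _, ENNReal.ofReal B ∂μ := by
            apply lintegral_mono_ae
            filter_upwards [haeμ] with p hp
            exact ENNReal.ofReal_le_ofReal hp.2.2
        _ = ENNReal.ofReal B * μ univ := lintegral_const _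
        _ < ⊤ := by simp [measure_univ, ENNReal.ofReal_lt_top]
    haveI : IsFiniteMeasure (c • μM) := by
      constructor
      rw [Measure.smul_apply, smul_eq_mul, measure_univ, mul_one]
      exact hctop.lt_top
    have Eq1 : μ.withDensity (fun p => ENNReal.ofReal p.2) = c • μM := by
      apply ext2D (A := A) (B := B)
      · rw [withDensity_apply _ hKmeas.compl,
          Measure.restrict_eq_zero.mpr hμsupp, lintegral_zero_measure]
      · rw [Measure.smul_apply, hμMsupp, smul_zero]
      · intro i j
        calc ∫ p, p.1 ^ i * p.2 ^ j ∂(μ.withDensity fun p => ENNReal.ofReal p.2)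
            = ∫ p, p.2.toNNReal • (p.1 ^ i * p.2 ^ j) ∂μ := by
              exact integral_withDensity_eq_integral_smul measurable_snd.real_toNNReal _
          _ = ∫ p, p.1 ^ i * p.2 ^ (j+1) ∂μ := by
              apply integral_congr_ae
              filter_upwards [haeμ] with p hp
              have h2 : 0 ≤ p.2 := hp.2.1
              simp only [NNReal.smul_def, Real.coe_toNNReal _ h2, smul_eq_mul, pow_succ]
              ring
          _ = β₀₀ ^ 2 * ∫ p, p.1 ^ i * p.2 ^ j ∂μM := hm2 i j
          _ = ∫ p, p.1 ^ i * p.2 ^ j ∂(c • μM) := by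
              rw [integral_smul_measure, hcdef, ENNReal.toReal_ofReal (by positivity),
                smul_eq_mul]
    have hf1 : Measurable fun p : ℝ×ℝ => (p.1, (0:ℝ)) := measurable_fst.prodMk measurable_const
    have hf2 : Measurable fun s : ℝ => (s, (0:ℝ)) := measurable_id.prodMk measurable_const
    haveI : IsProbabilityMeasure (μ.map fun p : ℝ×ℝ => (p.1, (0:ℝ))) :=
      Measure.isProbabilityMeasure_map hf1.aemeasurable
    haveI : IsProbabilityMeasure (ν.map fun s : ℝ => (s, (0:ℝ))) :=
      Measure.isProbabilityMeasure_map hf2.aemeasurable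
    have Eq2 : μ.map (fun p : ℝ×ℝ => (p.1, (0:ℝ))) = ν.map (fun s : ℝ => (s, (0:ℝ))) := by
      apply ext2D (A := A) (B := B)
      · rw [Measure.map_apply hf1 hKmeas.compl]
        apply measure_mono_null _ hμsupp
        intro p hp hpK
        exact hp ⟨hpK.1, ⟨le_refl 0, hB.le⟩⟩
      · rw [Measure.map_apply hf2 hKmeas.compl]
        apply measure_mono_null _ hνsupp
        intro s hs hsA
        exact hs ⟨hsA, ⟨le_refl 0, hB.le⟩⟩
      · intro i j
        rw [integral_map hf1.aemeasurable (f := fun p : ℝ×ℝ => p.1 ^ i * p.2 ^ j)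
            ((continuous_fst.pow i).mul (continuous_snd.pow j)).aestronglyMeasurable,
          integral_map hf2.aemeasurable (f := fun p : ℝ×ℝ => p.1 ^ i * p.2 ^ j)
            ((continuous_fst.pow i).mul (continuous_snd.pow j)).aestronglyMeasurable]
        cases j with
        | zero => simpa using hm1 i
        | succ n => simp [zero_pow]
    have hνE : ∀ E : Set ℝ, MeasurableSet E → μ (E ×ˢ (univ : Set ℝ)) = ν E := by
      intro E hE
      have h1 : (fun p : ℝ×ℝ => (p.1, (0:ℝ))) ⁻¹' (E ×ˢ (univ : Set ℝ)) = E ×ˢ (univ : Set ℝ) := by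
        ext p; simp
      have h2 : (fun s : ℝ => (s, (0:ℝ))) ⁻¹' (E ×ˢ (univ : Set ℝ)) = E := by
        ext s; simp
      have := congrArg (fun m : Measure (ℝ×ℝ) => m (E ×ˢ (univ : Set ℝ))) Eq2
      simp only [Measure.map_apply hf1 (hE.prod MeasurableSet.univ),
        Measure.map_apply hf2 (hE.prod MeasurableSet.univ), h1, h2] at this
      exact this
    have hkey : ∀ S : Set (ℝ×ℝ), MeasurableSet S → S ⊆ {p : ℝ×ℝ | 0 < p.2} →
        c * ∫⁻ p in S, g p ∂μM = μ S := by
      intro S hS hSpos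
      calc c * ∫⁻ p in S, g p ∂μM = ∫⁻ p in S, g p ∂(c • μM) := by
            rw [Measure.restrict_smul, lintegral_smul_measure, smul_eq_mul]
        _ = ∫⁻ p in S, g p ∂(μ.withDensity fun p => ENNReal.ofReal p.2) := by rw [Eq1]
        _ = ∫⁻ p, g p ∂((μ.restrict S).withDensity fun p => ENNReal.ofReal p.2) := by
            rw [restrict_withDensity hS]
        _ = ∫⁻ p in S, (ENNReal.ofReal p.2) * g p ∂μ :=
            lintegral_withDensity_eq_lintegral_mul _ measurable_snd.ennreal_ofReal hgm
        _ = ∫⁻ _ in S, 1 ∂μ := by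
            apply setLIntegral_congr_fun hS
            intro p hp
            exact ENNReal.mul_inv_cancel (ENNReal.ofReal_pos.mpr (hSpos hp)).ne'
              ENNReal.ofReal_ne_top
        _ = μ S := by rw [setLIntegral_one]
    have hS0meas : MeasurableSet {p : ℝ×ℝ | p.2 = 0} :=
      measurable_snd (measurableSet_singleton 0)
    have hμM0 : μM {p : ℝ×ℝ | p.2 = 0} = 0 := by
      have hz := congrArg (fun m : Measure (ℝ×ℝ) => m {p : ℝ×ℝ | p.2 = 0}) Eq1
      simp only [Measure.smul_apply, smul_eq_mul] at hz
      rw [withDensity_apply _ hS0meas] at hz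
      have h0 : ∫⁻ p in {p : ℝ×ℝ | p.2 = 0}, ENNReal.ofReal p.2 ∂μ = 0 := by
        rw [setLIntegral_congr_fun hS0meas
          (show EqOn (fun p : ℝ×ℝ => ENNReal.ofReal p.2) (fun _ => 0) {p : ℝ×ℝ | p.2 = 0} from
            fun p (hp : p.2 = 0) => by simp [hp])]
        simp
      rw [h0] at hz
      rcases mul_eq_zero.mp hz.symm with h | h
      · exact absurd h hc0
      · exact h
    have hμMneg : μM {p : ℝ×ℝ | p.2 < 0} = 0 := by
      apply measure_mono_null _ hμMsupp
      intro p hp hpK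
      exact absurd hpK.2.1 (not_le.mpr hp)
    have hcompl : μM ({p : ℝ×ℝ | 0 < p.2}ᶜ) = 0 := by
      apply measure_mono_null (fun p hp => ?_)
        (measure_union_null hμMneg hμM0)
      simp only [Set.mem_compl_iff, Set.mem_setOf_eq, not_lt] at hp
      simp only [Set.mem_union, Set.mem_setOf_eq]
      rcases lt_or_eq_of_le hp with h | h
      · exact Or.inl h
      · exact Or.inr h
    have htotal : c * ∫⁻ p, g p ∂μM = μ {p : ℝ×ℝ | 0 < p.2} := by
      have hsplit : ∫⁻ p, g p ∂μM = ∫⁻ p in {p : ℝ×ℝ | 0 < p.2}, g p ∂μM := by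
        rw [← lintegral_add_compl (fun p => g p) hpos,
          Measure.restrict_eq_zero.mpr hcompl, lintegral_zero_measure, add_zero]
      rw [hsplit]
      exact hkey _ hpos subset_rfl
    refine ⟨htotal, hνE, fun E hE => hkey _ ((hE.prod MeasurableSet.univ).inter hpos)
      inter_subset_right⟩
  have hA0 : (0:ℝ) ≤ A := hA.le
  constructor
  · constructor
    · rintro ⟨μ, hμprob, hμsupp, hm1, hm2⟩
      obtain ⟨htotal, hνE, hkeyE⟩ := FWD μ hμprob hμsupp hm1 hm2
      haveI := hμprob
      refine ⟨?_, ?_, ?_⟩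
      · by_contra hlt
        have htop : ∫⁻ p, g p ∂μM = ⊤ := le_antisymm le_top (not_lt.mp hlt)
        rw [htop, ENNReal.mul_top hc0] at htotal
        have h1 : μ {p : ℝ×ℝ | 0 < p.2} ≤ 1 := prob_le_one
        rw [← htotal] at h1
        exact absurd h1 (by simp)
      · rw [htotal]; exact prob_le_one
      · intro E hE hEA
        rw [hkeyE E hE]
        calc μ ((E ×ˢ (univ : Set ℝ)) ∩ {p : ℝ×ℝ | 0 < p.2})
            ≤ μ (E ×ˢ (univ : Set ℝ)) := measure_mono inter_subset_left
          _ = ν E := hνE E hE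
    · rintro ⟨hfin, hle1, hiii⟩
      have hS0meas : MeasurableSet {p : ℝ×ℝ | p.2 = 0} :=
        measurable_snd (measurableSet_singleton 0)
      have hμM0 : μM {p : ℝ×ℝ | p.2 = 0} = 0 := by
        by_contra h0
        have hconst : ∫⁻ p in {p : ℝ×ℝ | p.2 = 0}, g p ∂μM
            = ⊤ * μM {p : ℝ×ℝ | p.2 = 0} := by
          rw [show ∫⁻ p in {p : ℝ×ℝ | p.2 = 0}, g p ∂μM
              = ∫⁻ _ in {p : ℝ×ℝ | p.2 = 0}, (⊤:ℝ≥0∞) ∂μM from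
            setLIntegral_congr_fun hS0meas (fun p hp => by
              simp only [Set.mem_setOf_eq] at hp
              simp [hgdef, hp])]
          exact setLIntegral_const _ _
        have htop : (⊤ : ℝ≥0∞) ≤ ∫⁻ p, g p ∂μM := by
          rw [← ENNReal.top_mul h0, ← hconst]
          exact setLIntegral_le_lintegral _ _
        exact absurd hfin (not_lt.mpr htop)
      have hμMneg : μM {p : ℝ×ℝ | p.2 < 0} = 0 := by
        apply measure_mono_null _ hμMsupp
        intro p hp hpK
        exact absurd hpK.2.1 (not_le.mpr hp)
      have haeM : ∀ᵐ p ∂μM, 0 < p.2 ∧ p ∈ K := by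
        rw [ae_iff]
        apply measure_mono_null (fun p hp => ?_)
          (measure_union_null (measure_union_null hμMneg hμM0) hμMsupp)
        simp only [Set.mem_setOf_eq, not_and_or, Set.mem_union, Set.mem_compl_iff] at hp ⊢
        rcases hp with hp | hp
        · left
          rcases lt_or_eq_of_le (not_lt.mp hp) with h | h
          · exact Or.inl h
          · exact Or.inr h
        · right; exact hp
      set ρ : Measure (ℝ×ℝ) := c • (μM.withDensity g) with hρdef
      have hρapp : ∀ S : Set (ℝ×ℝ), MeasurableSet S → ρ S = c * ∫⁻ p in S, g p ∂μM := by
        intro S hS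
        rw [hρdef, Measure.smul_apply, withDensity_apply _ hS, smul_eq_mul]
      have hρuniv : ρ univ = c * ∫⁻ p, g p ∂μM := by
        rw [hρapp univ MeasurableSet.univ, Measure.restrict_univ]
      have hρuniv_le : ρ univ ≤ 1 := by rw [hρuniv]; exact hle1
      haveI : IsFiniteMeasure ρ := ⟨lt_of_le_of_lt hρuniv_le (by simp)⟩
      have hρK : ρ Kᶜ = 0 := by
        rw [hρapp _ hKmeas.compl, Measure.restrict_eq_zero.mpr hμMsupp,
          lintegral_zero_measure, mul_zero]
      set m : Measure ℝ := ρ.map Prod.fst with hmdef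
      have hmapp : ∀ F : Set ℝ, MeasurableSet F → m F = ρ (Prod.fst ⁻¹' F) :=
        fun F hF => Measure.map_apply measurable_fst hF
      have hmν : m ≤ ν := by
        rw [Measure.le_iff]
        intro F hF
        have hEm : MeasurableSet (F ∩ Set.Icc (0:ℝ) A) := hF.inter measurableSet_Icc
        have hsub : Prod.fst ⁻¹' F ⊆ ((F ∩ Set.Icc (0:ℝ) A) ×ˢ (univ : Set ℝ)) ∪ Kᶜ := by
          intro p hp
          by_cases hpK : p ∈ K
          · exact Or.inl ⟨⟨hp, hpK.1⟩, trivial⟩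
          · exact Or.inr hpK
        have hres : (μM.restrict ((F ∩ Set.Icc (0:ℝ) A) ×ˢ (univ : Set ℝ))).restrict
            {p : ℝ×ℝ | 0 < p.2} = μM.restrict ((F ∩ Set.Icc (0:ℝ) A) ×ˢ (univ : Set ℝ)) :=
          Measure.restrict_eq_self_of_ae_mem (ae_restrict_of_ae (haeM.mono fun p h => h.1))
        have hEuniv : ρ ((F ∩ Set.Icc (0:ℝ) A) ×ˢ (univ : Set ℝ))
            = c * ∫⁻ p in ((F ∩ Set.Icc (0:ℝ) A) ×ˢ (univ : Set ℝ)) ∩ {p : ℝ×ℝ | 0 < p.2},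
                g p ∂μM := by
          rw [hρapp _ (hEm.prod MeasurableSet.univ)]
          congr 1
          calc ∫⁻ p in (F ∩ Set.Icc (0:ℝ) A) ×ˢ (univ : Set ℝ), g p ∂μM
              = ∫⁻ p, g p ∂((μM.restrict ((F ∩ Set.Icc (0:ℝ) A) ×ˢ (univ : Set ℝ))).restrict
                  {p : ℝ×ℝ | 0 < p.2}) := by rw [hres]
            _ = ∫⁻ p in {p : ℝ×ℝ | 0 < p.2} ∩ ((F ∩ Set.Icc (0:ℝ) A) ×ˢ (univ : Set ℝ)),
                  g p ∂μM := by rw [Measure.restrict_restrict hpos]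
            _ = ∫⁻ p in ((F ∩ Set.Icc (0:ℝ) A) ×ˢ (univ : Set ℝ)) ∩ {p : ℝ×ℝ | 0 < p.2},
                  g p ∂μM := by rw [Set.inter_comm]
        calc m F = ρ (Prod.fst ⁻¹' F) := hmapp F hF
          _ ≤ ρ (((F ∩ Set.Icc (0:ℝ) A) ×ˢ (univ : Set ℝ)) ∪ Kᶜ) := measure_mono hsub
          _ ≤ ρ ((F ∩ Set.Icc (0:ℝ) A) ×ˢ (univ : Set ℝ)) + ρ Kᶜ := measure_union_le _ _
          _ = ρ ((F ∩ Set.Icc (0:ℝ) A) ×ˢ (univ : Set ℝ)) := by rw [hρK, add_zero]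
          _ ≤ ν (F ∩ Set.Icc (0:ℝ) A) := by
              rw [hEuniv]; exact hiii _ hEm inter_subset_right
          _ ≤ ν F := measure_mono inter_subset_left
      haveI : IsFiniteMeasure m := by
        refine ⟨?_⟩
        rw [hmapp univ MeasurableSet.univ, Set.preimage_univ]
        exact lt_of_le_of_lt hρuniv_le (by simp)
      set σ : Measure ℝ := ν - m with hσdef
      have hσν : σ ≤ ν := Measure.sub_le
      haveI : IsFiniteMeasure σ := isFiniteMeasure_of_le ν hσν
      have hσm : σ + m = ν := Measure.sub_add_cancel_of_le hmν
      have hf2 : Measurable (fun s : ℝ => (s, (0:ℝ))) := measurable_id.prodMk measurable_const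
      set τ : Measure (ℝ×ℝ) := σ.map (fun s : ℝ => (s, (0:ℝ))) with hτdef
      set μ : Measure (ℝ×ℝ) := ρ + τ with hμdef
      have hmuniv : m univ = ρ univ := by rw [hmapp _ MeasurableSet.univ, Set.preimage_univ]
      have hτuniv : τ univ = σ univ := by
        rw [hτdef, Measure.map_apply hf2 MeasurableSet.univ, Set.preimage_univ]
      have hσuniv : σ univ = 1 - ρ univ := by
        rw [hσdef, Measure.sub_apply MeasurableSet.univ hmν, measure_univ, hmuniv]
      have hμprob : IsProbabilityMeasure μ := by
        constructor
        rw [hμdef, Measure.add_apply, hτuniv, hσuniv]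
        exact add_tsub_cancel_of_le hρuniv_le
      have hσA : σ (Set.Icc (0:ℝ) A)ᶜ = 0 :=
        le_antisymm (le_trans (Measure.le_iff.mp hσν _ measurableSet_Icc.compl) hνsupp.le)
          zero_le
      have hμsupp : μ Kᶜ = 0 := by
        rw [hμdef, Measure.add_apply, hρK, zero_add, hτdef,
          Measure.map_apply hf2 hKmeas.compl]
        exact measure_mono_null (fun s hs hsA => hs ⟨hsA, ⟨le_refl 0, hB.le⟩⟩) hσA
      have haeμ : ∀ᵐ p ∂μ, p ∈ K := by rw [ae_iff]; convert hμsupp using 2; rfl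
      have haeν : ∀ᵐ s ∂ν, s ∈ Set.Icc (0:ℝ) A := by rw [ae_iff]; convert hνsupp using 2; rfl
      refine ⟨μ, hμprob, hμsupp, ?_, ?_⟩
      · intro i
        have hL : ∫⁻ p, ENNReal.ofReal (p.1 ^ i) ∂μ = ∫⁻ s, ENNReal.ofReal (s ^ i) ∂ν := by
          rw [hμdef, lintegral_add_measure]
          have hτpart : ∫⁻ p, ENNReal.ofReal (p.1 ^ i) ∂τ
              = ∫⁻ s, ENNReal.ofReal (s ^ i) ∂σ := by
            rw [hτdef, lintegral_map ((measurable_fst.pow_const i).ennreal_ofReal) hf2]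
          have hρpart : ∫⁻ p, ENNReal.ofReal (p.1 ^ i) ∂ρ
              = ∫⁻ s, ENNReal.ofReal (s ^ i) ∂m := by
            rw [hmdef, lintegral_map ((continuous_pow i).measurable.ennreal_ofReal) measurable_fst]
          rw [hτpart, hρpart, add_comm, ← lintegral_add_measure, hσm]
        rw [integral_eq_lintegral_of_nonneg_ae (f := fun p : ℝ×ℝ => p.1 ^ i)
            (by filter_upwards [haeμ] with p hp; exact pow_nonneg hp.1.1 i)
            (continuous_fst.pow i).aestronglyMeasurable,
          integral_eq_lintegral_of_nonneg_ae (f := fun s : ℝ => s ^ i)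
            (by filter_upwards [haeν] with s hs; exact pow_nonneg hs.1 i)
            (continuous_pow i).aestronglyMeasurable,
          hL]
      · intro i j
        have hτ0 : ∫⁻ p, ENNReal.ofReal (p.1 ^ i * p.2 ^ (j+1)) ∂τ = 0 := by
          rw [hτdef, lintegral_map (f := fun p : ℝ×ℝ => ENNReal.ofReal (p.1 ^ i * p.2 ^ (j+1)))
            (((measurable_fst.pow_const i).mul (measurable_snd.pow_const (j+1))).ennreal_ofReal)
            hf2]
          simp
        have hρpart : ∫⁻ p, ENNReal.ofReal (p.1 ^ i * p.2 ^ (j+1)) ∂ρ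
            = c * ∫⁻ p, ENNReal.ofReal (p.1 ^ i * p.2 ^ j) ∂μM := by
          rw [hρdef, lintegral_smul_measure]
          congr 1
          rw [lintegral_withDensity_eq_lintegral_mul _ hgm
            (g := fun p : ℝ×ℝ => ENNReal.ofReal (p.1 ^ i * p.2 ^ (j+1)))
            (((measurable_fst.pow_const i).mul (measurable_snd.pow_const (j+1))).ennreal_ofReal)]
          apply lintegral_congr_ae
          filter_upwards [haeM] with p hp
          obtain ⟨hpt, hpK⟩ := hp
          have hs0 : (0:ℝ) ≤ p.1 := hpK.1.1
          have hmul : p.1 ^ i * p.2 ^ (j+1) = (p.1 ^ i * p.2 ^ j) * p.2 := by ring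
          simp only [Pi.mul_apply]
          rw [hmul, ENNReal.ofReal_mul (mul_nonneg (pow_nonneg hs0 i) (pow_nonneg hpt.le j)),
            mul_comm (ENNReal.ofReal (p.1 ^ i * p.2 ^ j)) (ENNReal.ofReal p.2), ← mul_assoc,
            hgdef, ENNReal.inv_mul_cancel (ENNReal.ofReal_pos.mpr hpt).ne' ENNReal.ofReal_ne_top,
            one_mul]
        have hLμ : ∫⁻ p, ENNReal.ofReal (p.1 ^ i * p.2 ^ (j+1)) ∂μ
            = c * ∫⁻ p, ENNReal.ofReal (p.1 ^ i * p.2 ^ j) ∂μM := by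
          rw [hμdef, lintegral_add_measure, hτ0, add_zero, hρpart]
        rw [integral_eq_lintegral_of_nonneg_ae (f := fun p : ℝ×ℝ => p.1 ^ i * p.2 ^ (j+1))
            (by filter_upwards [haeμ] with p hp;
                exact mul_nonneg (pow_nonneg hp.1.1 i) (pow_nonneg hp.2.1 (j+1)))
            ((continuous_fst.pow (i)).mul (continuous_snd.pow (j+1))).aestronglyMeasurable,
          integral_eq_lintegral_of_nonneg_ae (f := fun p : ℝ×ℝ => p.1 ^ i * p.2 ^ j)
            (by filter_upwards [haeM] with p hp;
                exact mul_nonneg (pow_nonneg hp.2.1.1 i) (pow_nonneg hp.2.2.1 j))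
            ((continuous_fst.pow (i)).mul (continuous_snd.pow (j))).aestronglyMeasurable,
          hLμ, ENNReal.toReal_mul, hcdef, ENNReal.toReal_ofReal (by positivity)]
  · rintro ⟨μ, hμprob, hμsupp, hm1, hm2⟩ htot1 E hE hEA
    obtain ⟨htotal, hνE, hkeyE⟩ := FWD μ hμprob hμsupp hm1 hm2
    haveI := hμprob
    have hμpos : μ {p : ℝ×ℝ | 0 < p.2} = 1 := by rw [← htotal]; exact htot1
    have hμcompl : μ ({p : ℝ×ℝ | 0 < p.2}ᶜ) = 0 := by
      rw [measure_compl hpos (measure_ne_top μ _), measure_univ, hμpos, tsub_self]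
    rw [hkeyE E hE]
    apply le_antisymm
    · calc μ ((E ×ˢ (univ : Set ℝ)) ∩ {p : ℝ×ℝ | 0 < p.2})
          ≤ μ (E ×ˢ (univ : Set ℝ)) := measure_mono inter_subset_left
        _ = ν E := hνE E hE
    · rw [← hνE E hE]
      calc μ (E ×ˢ (univ : Set ℝ))
          ≤ μ (((E ×ˢ (univ : Set ℝ)) ∩ {p : ℝ×ℝ | 0 < p.2}) ∪ {p : ℝ×ℝ | 0 < p.2}ᶜ) := by
            apply measure_mono
            intro p hp
            by_cases h : 0 < p.2
            · exact Or.inl ⟨hp, h⟩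
            · exact Or.inr h
        _ ≤ μ ((E ×ˢ (univ : Set ℝ)) ∩ {p : ℝ×ℝ | 0 < p.2}) + μ ({p : ℝ×ℝ | 0 < p.2}ᶜ) :=
            measure_union_le _ _
        _ = μ ((E ×ˢ (univ : Set ℝ)) ∩ {p : ℝ×ℝ | 0 < p.2}) := by rw [hμcompl, add_zero]
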